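/- arXiv:1112.0058 — 3 statements merged into one kernel-verified Lean document; each statement's English description precedes it below -/
import Mathlib

section
/- Let $h \ge 1$ and let $d_1, \ldots, d_h$ be nonnegative real numbers. Let $R$ be a real number with $R > \sum_{i=1}^h d_i + \frac{\prod_{i=1}^h d_i}{(h-1)!}$ and $R > 0$. Then $\prod_{i=1}^h (R - d_i) > \frac{\prod_{i=1}^h d_i}{(h-1)!} \cdot R^{h-1}$. -/
lemma stmt_3_aux (R : ℝ) (hR0 : 0 ≤ R) :
    ∀ n (d : Fin n → ℝ), (∀ i, 0 ≤ d i) → (∑ i, d i) ≤ R →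
      (R - ∑ i, d i) * R ^ n ≤ (∏ i, (R - d i)) * R := by
  intro n
  induction n with
  | zero => intro d _ _; simp
  | succ n ih =>
    intro d hd hsum
    rw [Fin.sum_univ_castSucc] at hsum ⊢
    rw [Fin.prod_univ_castSucc]
    set S' := ∑ i : Fin n, d i.castSucc with hS'def
    set P' := ∏ i : Fin n, (R - d i.castSucc) with hP'def
    have hS' : 0 ≤ S' := Finset.sum_nonneg fun i _ => hd _
    have hlast : 0 ≤ d (Fin.last n) := hd _
    have hsum' : S' ≤ R := by linarith
    have hIH : (R - S') * R ^ n ≤ P' * R := ih _ (fun i => hd _) hsum'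
    have hRd : 0 ≤ R - d (Fin.last n) := by linarith
    have hmul := mul_le_mul_of_nonneg_right hIH hRd
    have hpow : (0:ℝ) ≤ R ^ n := pow_nonneg hR0 n
    rw [pow_succ]
    nlinarith [mul_nonneg (mul_nonneg hS' hlast) hpow]

theorem stmt_3 (h : ℕ) (hh : 1 ≤ h) (d : Fin h → ℝ) (hd : ∀ i, 0 ≤ d i)
    (R : ℝ) (hR0 : 0 < R)
    (hR : R > (∑ i, d i) + (∏ i, d i) / (h - 1).factorial) :
    ∏ i, (R - d i) > (∏ i, d i) / (h - 1).factorial * R ^ (h - 1) := by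
  set c := (∏ i, d i) / (h - 1).factorial with hc
  have hc0 : 0 ≤ c := div_nonneg (Finset.prod_nonneg fun i _ => hd i)
    (Nat.cast_nonneg _)
  have hsum : (∑ i, d i) ≤ R := by linarith
  have key := stmt_3_aux R hR0.le h d hd hsum
  have hpow : (0:ℝ) < R ^ (h - 1) := pow_pos hR0 _
  have hRh : R ^ h = R ^ (h - 1) * R := by
    rw [← pow_succ, Nat.sub_add_cancel hh]
  rw [hRh] at key
  have h1 : (R - ∑ i, d i) * R ^ (h-1) ≤ ∏ i, (R - d i) := by
    rw [← mul_assoc] at key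
    exact (mul_le_mul_iff_of_pos_right hR0).mp key
  have h2 : c * R ^ (h-1) < (R - ∑ i, d i) * R ^ (h-1) := by
    apply mul_lt_mul_of_pos_right _ hpow
    linarith
  linarith
end

section
/- Let $h \ge 1$, let $t_1, \ldots, t_h$ be positive integers, let $s$ be an integer with $s > h$, and let $r$ be an integer with $r > \sum_{i=1}^h t_i + \frac{\prod_{i=1}^h t_i}{(h-1)!} - h$. Assume additionally $s - h - 1 \le h - 1$. Set $R = r + s$. Then $\frac{\left(\prod_{i=1}^h t_i\right) \prod_{j=h+1}^{s-1} (r+j)}{\left(\prod_{i=1}^h (R - t_i)\right) \prod_{j=h+1}^{s-1} (R - r - j)} < 1$. -/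
open Finset

lemma aux_fact : ∀ (b a : ℕ), (a + b).factorial ≤ a.factorial * (a + b) ^ b := by
  intro b
  induction b with
  | zero => simp
  | succ b ih =>
    intro a
    have h2 := ih a
    have h3 : (a + b) ^ b ≤ (a + b + 1) ^ b := Nat.pow_le_pow_left (Nat.le_succ _) b
    calc (a + (b+1)).factorial = (a + b + 1) * (a + b).factorial := by
          rw [← Nat.add_assoc]; exact rfl
      _ ≤ (a + b + 1) * (a.factorial * (a + b) ^ b) := Nat.mul_le_mul_left _ h2
      _ ≤ (a + b + 1) * (a.factorial * (a + b + 1) ^ b) := by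
          exact Nat.mul_le_mul_left _ (Nat.mul_le_mul_left _ h3)
      _ = a.factorial * (a + (b+1)) ^ (b+1) := by ring

lemma aux_prod_sub (n h : ℕ) : ∏ j ∈ Icc (h+1) (h+n), (h+1+n - j) = n.factorial := by
  rw [← Finset.Ico_add_one_right_eq_Icc, prod_Ico_eq_prod_range]
  have hc : h + n + 1 - (h + 1) = n := by omega
  rw [hc]
  calc ∏ i ∈ range n, (h + 1 + n - (h + 1 + i)) = ∏ i ∈ range n, (n - i) := by
        apply prod_congr rfl; intro i hi; omega
    _ = ∏ i ∈ range n, ((n - 1 - i) + 1) := by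
        apply prod_congr rfl; intro i hi; simp at hi; omega
    _ = ∏ i ∈ range n, (i + 1) := prod_range_reflect (fun i => i + 1) n
    _ = n.factorial := prod_range_add_one_eq_factorial n

lemma aux_key (f : ℕ → ℚ) (x : ℚ) : ∀ (A : Finset ℕ), (∀ i ∈ A, 0 ≤ f i) →
    (∑ i ∈ A, f i) ≤ x → x ^ A.card * (x - ∑ i ∈ A, f i) ≤ x * ∏ i ∈ A, (x - f i) := by
  intro A
  induction A using Finset.cons_induction with
  | empty => simp
  | cons a A ha ih =>
    intro hf hx
    rw [Finset.sum_cons] at hx ⊢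
    rw [Finset.prod_cons, Finset.card_cons]
    have hfa : 0 ≤ f a := hf a (Finset.mem_cons_self a A)
    have hfA : ∀ i ∈ A, 0 ≤ f i := fun i hi => hf i (Finset.mem_cons_of_mem hi)
    have hsA : 0 ≤ ∑ i ∈ A, f i := Finset.sum_nonneg hfA
    have hx' : (∑ i ∈ A, f i) ≤ x := by linarith
    have ihx := ih hfA hx'
    have hx0 : 0 ≤ x := le_trans hsA hx'
    have hprod : 0 ≤ ∏ i ∈ A, (x - f i) := by
      apply Finset.prod_nonneg
      intro i hi
      have : f i ≤ ∑ j ∈ A, f j := Finset.single_le_sum hfA hi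
      linarith
    have hpow : (0:ℚ) ≤ x ^ A.card := pow_nonneg hx0 _
    have key : x ^ A.card * ((x - f a) * (x - ∑ i ∈ A, f i)) ≤ (x - f a) * (x * ∏ i ∈ A, (x - f i)) := by
      have h1 : 0 ≤ x - f a := by linarith
      calc x ^ A.card * ((x - f a) * (x - ∑ i ∈ A, f i))
          = (x - f a) * (x ^ A.card * (x - ∑ i ∈ A, f i)) := by ring
        _ ≤ (x - f a) * (x * ∏ i ∈ A, (x - f i)) := mul_le_mul_of_nonneg_left ihx h1
    calc x ^ (A.card + 1) * (x - (f a + ∑ i ∈ A, f i))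
        = x ^ A.card * (x * (x - f a - ∑ i ∈ A, f i)) := by ring
      _ ≤ x ^ A.card * ((x - f a) * (x - ∑ i ∈ A, f i)) := by
          apply mul_le_mul_of_nonneg_left _ hpow
          nlinarith
      _ ≤ (x - f a) * (x * ∏ i ∈ A, (x - f i)) := key
      _ = x * ((x - f a) * ∏ i ∈ A, (x - f i)) := by ring

theorem stmt_6 (h : ℕ) (hh : 1 ≤ h) (t : ℕ → ℕ)
    (htpos : ∀ i ∈ Finset.Icc 1 h, 0 < t i)
    (htmono : ∀ i ∈ Finset.Icc 1 (h - 1), t i < t (i + 1))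
    (s : ℕ) (hs : h < s) (hsh : (s : ℤ) - h - 1 ≤ (h : ℤ) - 1)
    (r : ℤ) (htr : (t h : ℤ) < r + h + 1)
    (hr : (r : ℚ) > (∑ i ∈ Finset.Icc 1 h, (t i : ℚ)) +
        (∏ i ∈ Finset.Icc 1 h, (t i : ℚ)) / (h - 1).factorial - h) :
    ((∏ i ∈ Finset.Icc 1 h, (t i : ℚ)) *
        ∏ j ∈ Finset.Icc (h + 1) (s - 1), ((r : ℚ) + j)) /
      ((∏ i ∈ Finset.Icc 1 h, (((r : ℚ) + s) - t i)) *
        ∏ j ∈ Finset.Icc (h + 1) (s - 1), (((r : ℚ) + s) - (r : ℚ) - j)) < 1 := by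
  set S : ℚ := ∑ i ∈ Finset.Icc 1 h, (t i : ℚ) with hSdef
  set P : ℚ := ∏ i ∈ Finset.Icc 1 h, (t i : ℚ) with hPdef
  set R : ℚ := (r : ℚ) + s with hRdef
  set n : ℕ := s - h - 1 with hndef
  set m : ℕ := h - 1 with hmdef
  have hsn : s = h + 1 + n := by omega
  have hnm : n ≤ m := by omega
  have hhm : h = m + 1 := by omega
  -- basic positivity
  have ht1 : ∀ i ∈ Finset.Icc 1 h, (1:ℚ) ≤ (t i : ℚ) := by
    intro i hi; exact_mod_cast htpos i hi
  have hP : 0 < P := by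
    apply Finset.prod_pos; intro i hi; linarith [ht1 i hi]
  have hS : (h:ℚ) ≤ S := by
    have : (Finset.Icc 1 h).card • (1:ℚ) ≤ S := Finset.card_nsmul_le_sum _ _ _ ht1
    simpa [Nat.card_Icc, nsmul_eq_mul] using this
  have hfac : (0:ℚ) < (m.factorial : ℚ) := by positivity
  have h1 : P / (m.factorial : ℚ) < (r:ℚ) + h - S := by
    rw [hmdef]; linarith [hr]
  have hPfac : P < ((r:ℚ) + h - S) * (m.factorial : ℚ) := (div_lt_iff₀ hfac).mp h1
  have hSr : S < (r:ℚ) + h := by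
    have := div_pos hP hfac; linarith
  have hr0 : (0:ℚ) < (r:ℚ) := by
    have := div_pos hP hfac; linarith
  have hr1 : (1:ℚ) ≤ (r:ℚ) := by
    have : (0:ℤ) < r := by exact_mod_cast hr0
    exact_mod_cast this
  have hhs : (h:ℚ) ≤ (s:ℚ) := by exact_mod_cast hs.le
  have hSR : S ≤ R := by rw [hRdef]; linarith
  have hR0 : (0:ℚ) < R := by
    rw [hRdef]; have : (0:ℚ) ≤ (s:ℚ) := by positivity
    linarith
  -- D1 bound
  have hcard : (Finset.Icc 1 h).card = h := by simp [Nat.card_Icc]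
  have hD1 : R ^ m * (R - S) ≤ ∏ i ∈ Finset.Icc 1 h, (R - (t i : ℚ)) := by
    have hk := aux_key (fun i => (t i : ℚ)) R (Finset.Icc 1 h)
      (fun i hi => by positivity) hSR
    rw [hcard] at hk
    have hRh : R ^ h = R * R ^ m := by rw [hhm, pow_succ]; ring
    rw [hRh] at hk
    have : R * (R ^ m * (R - S)) ≤ R * ∏ i ∈ Finset.Icc 1 h, (R - (t i : ℚ)) := by
      calc R * (R ^ m * (R - S)) = R * R ^ m * (R - S) := by ring
        _ ≤ _ := hk
    exact le_of_mul_le_mul_left this hR0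
  have hD1pos : 0 < ∏ i ∈ Finset.Icc 1 h, (R - (t i : ℚ)) := by
    have : 0 < R ^ m * (R - S) := by
      apply mul_pos (pow_pos hR0 m); linarith
    linarith [hD1]
  -- D2 value
  have hD2 : ∏ j ∈ Finset.Icc (h + 1) (s - 1), (R - (r:ℚ) - (j:ℚ)) = (n.factorial : ℚ) := by
    have e1 : ∀ j ∈ Finset.Icc (h + 1) (s - 1), R - (r:ℚ) - (j:ℚ) = ((s - j : ℕ) : ℚ) := by
      intro j hj
      have hj2 := (Finset.mem_Icc.mp hj).2
      have hjs : j ≤ s := by omega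
      rw [Nat.cast_sub hjs, hRdef]; ring
    rw [Finset.prod_congr rfl e1, ← Nat.cast_prod]
    have : ∏ j ∈ Finset.Icc (h + 1) (s - 1), (s - j) = n.factorial := by
      have hs1 : s - 1 = h + n := by omega
      rw [hs1]
      calc ∏ j ∈ Finset.Icc (h + 1) (h + n), (s - j)
          = ∏ j ∈ Finset.Icc (h + 1) (h + n), (h + 1 + n - j) := by
            apply Finset.prod_congr rfl; intro j hj; omega
        _ = n.factorial := aux_prod_sub n h
    rw [this]
  -- N2 bound
  have hcardB : (Finset.Icc (h + 1) (s - 1)).card = n := by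
    simp [Nat.card_Icc]; omega
  have hN2 : ∏ j ∈ Finset.Icc (h + 1) (s - 1), ((r:ℚ) + j) ≤ R ^ n := by
    calc ∏ j ∈ Finset.Icc (h + 1) (s - 1), ((r:ℚ) + j)
        ≤ ∏ j ∈ Finset.Icc (h + 1) (s - 1), R := by
          apply Finset.prod_le_prod
          · intro j hj; positivity
          · intro j hj
            have hj2 := (Finset.mem_Icc.mp hj).2
            have : (j:ℚ) ≤ (s:ℚ) := by exact_mod_cast (by omega : j ≤ s)
            rw [hRdef]; linarith
      _ = R ^ n := by rw [Finset.prod_const, hcardB]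
  have hN2pos : 0 ≤ ∏ j ∈ Finset.Icc (h + 1) (s - 1), ((r:ℚ) + j) := by
    apply Finset.prod_nonneg; intro j hj; positivity
  -- factorial bound
  have hfact : (m.factorial : ℚ) ≤ (n.factorial : ℚ) * R ^ (m - n) := by
    have hnat : m.factorial ≤ n.factorial * m ^ (m - n) := by
      have := aux_fact (m - n) n
      have hm : n + (m - n) = m := by omega
      rwa [hm] at this
    have h2 : (m.factorial : ℚ) ≤ (n.factorial : ℚ) * (m:ℚ) ^ (m - n) := by
      exact_mod_cast hnat
    have h3 : (m:ℚ) ^ (m - n) ≤ R ^ (m - n) := by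
      apply pow_le_pow_left₀ (by positivity)
      have : (m:ℚ) ≤ (s:ℚ) := by exact_mod_cast (by omega : m ≤ s)
      rw [hRdef]; linarith
    calc (m.factorial : ℚ) ≤ (n.factorial : ℚ) * (m:ℚ) ^ (m - n) := h2
      _ ≤ (n.factorial : ℚ) * R ^ (m - n) := by
          apply mul_le_mul_of_nonneg_left h3 (by positivity)
  -- assemble
  rw [div_lt_one]
  · calc P * ∏ j ∈ Finset.Icc (h + 1) (s - 1), ((r:ℚ) + j)
        ≤ P * R ^ n := mul_le_mul_of_nonneg_left hN2 hP.le
      _ < (((r:ℚ) + h - S) * (m.factorial : ℚ)) * R ^ n := by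
          apply mul_lt_mul_of_pos_right hPfac (pow_pos hR0 n)
      _ ≤ ((R - S) * ((n.factorial : ℚ) * R ^ (m - n))) * R ^ n := by
          apply mul_le_mul_of_nonneg_right _ (pow_pos hR0 n).le
          apply mul_le_mul _ hfact hfac.le (by linarith)
          rw [hRdef]; linarith
      _ = (n.factorial : ℚ) * (R ^ (m - n) * R ^ n) * (R - S) := by ring
      _ = (n.factorial : ℚ) * R ^ m * (R - S) := by
          have hmn : m - n + n = m := by omega
          rw [← pow_add, hmn]
      _ ≤ (n.factorial : ℚ) * ∏ i ∈ Finset.Icc 1 h, (R - (t i : ℚ)) := by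
          have : (0:ℚ) ≤ (n.factorial : ℚ) := by positivity
          calc (n.factorial : ℚ) * R ^ m * (R - S)
              = (n.factorial : ℚ) * (R ^ m * (R - S)) := by ring
            _ ≤ _ := mul_le_mul_of_nonneg_left hD1 this
      _ = (∏ i ∈ Finset.Icc 1 h, (R - (t i : ℚ))) *
            ∏ j ∈ Finset.Icc (h + 1) (s - 1), (R - (r:ℚ) - (j:ℚ)) := by
          rw [hD2]; ring
  · apply mul_pos hD1pos
    rw [hD2]; positivity
end

section
/- Let $h \ge 2$ and let $d_1, \ldots, d_h$ be nonnegative real numbers. Let $R$ be a positive real number with $R > \sum_{i=1}^h d_i + \frac{\prod_{i=1}^h d_i}{(h-1)!}$. Then $R^h - \left(\sum_{i=1}^h d_i + \frac{\prod_{i=1}^h d_i}{(h-1)!}\right) R^{h-1} + \sum_{i=2}^h (-1)^i \sigma_i(d_1,\ldots,d_h) R^{h-i} > 0$, where $\sigma_i$ denotes the $i$th elementary symmetric polynomial. -/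
/-- The `i`th elementary symmetric polynomial evaluated at `d : Fin h → ℝ`. -/
def esymm (h i : ℕ) (d : Fin h → ℝ) : ℝ :=
  ∑ s ∈ Finset.powersetCard i (Finset.univ : Finset (Fin h)), ∏ j ∈ s, d j

/-- Weierstrass-type inequality: `1 - ∑ x ≤ ∏ (1 - x)` for nonnegative `x ≤ 1`. -/
lemma aux_one_sub_sum_le {ι : Type*} (s : Finset ι) (f : ι → ℝ)
    (h0 : ∀ i ∈ s, 0 ≤ f i) (h1 : ∀ i ∈ s, f i ≤ 1) :
    1 - ∑ i ∈ s, f i ≤ ∏ i ∈ s, (1 - f i) := by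
  classical
  induction s using Finset.cons_induction with
  | empty => simp
  | cons a s ha ih =>
    rw [Finset.prod_cons, Finset.sum_cons]
    have hf0 : 0 ≤ f a := h0 a (Finset.mem_cons_self a s)
    have hf1 : f a ≤ 1 := h1 a (Finset.mem_cons_self a s)
    have hs0 : 0 ≤ ∑ i ∈ s, f i :=
      Finset.sum_nonneg fun i hi => h0 i (Finset.mem_cons_of_mem hi)
    have ih' := ih (fun i hi => h0 i (Finset.mem_cons_of_mem hi))
      (fun i hi => h1 i (Finset.mem_cons_of_mem hi))
    calc 1 - (f a + ∑ i ∈ s, f i)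
        ≤ (1 - f a) * (1 - ∑ i ∈ s, f i) := by nlinarith
      _ ≤ (1 - f a) * ∏ i ∈ s, (1 - f i) := by
          apply mul_le_mul_of_nonneg_left ih' (by linarith)

/-- Product expansion into elementary symmetric polynomials. -/
lemma aux_prod_eq (h : ℕ) (d : Fin h → ℝ) (R : ℝ) :
    ∏ i, (R - d i) =
      ∑ i ∈ Finset.range (h + 1), (-1 : ℝ) ^ i * esymm h i d * R ^ (h - i) := by
  classical
  have e1 : ∀ i : Fin h, R - d i = (-d i) + R := fun i => by ring
  rw [Finset.prod_congr rfl fun i _ => e1 i,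
    Finset.prod_add (fun i => -d i) (fun _ => R) Finset.univ, Finset.sum_powerset]
  rw [Finset.card_univ, Fintype.card_fin]
  refine Finset.sum_congr rfl fun i hi => ?_
  rw [esymm, Finset.mul_sum, Finset.sum_mul]
  refine Finset.sum_congr rfl fun t ht => ?_
  have hcard : t.card = i := (Finset.mem_powersetCard.mp ht).2
  have hsub : t ⊆ Finset.univ := Finset.subset_univ t
  have hneg : ∏ j ∈ t, -d j = (-1 : ℝ) ^ i * ∏ j ∈ t, d j := by
    rw [← hcard]
    calc ∏ j ∈ t, -d j = ∏ j ∈ t, (-1 : ℝ) * d j := by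
          exact Finset.prod_congr rfl fun j _ => (neg_one_mul _).symm
      _ = (∏ _j ∈ t, (-1 : ℝ)) * ∏ j ∈ t, d j := Finset.prod_mul_distrib
      _ = (-1 : ℝ) ^ t.card * ∏ j ∈ t, d j := by rw [Finset.prod_const]
  rw [Finset.prod_const, Finset.card_sdiff_of_subset hsub, Finset.card_univ, Fintype.card_fin, hcard, hneg]

theorem stmt_7 (h : ℕ) (hh : 2 ≤ h) (d : Fin h → ℝ) (hd : ∀ i, 0 ≤ d i)
    (R : ℝ) (hR0 : 0 < R)
    (hR : R > (∑ i, d i) + (∏ i, d i) / (h - 1).factorial) :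
    R ^ h - ((∑ i, d i) + (∏ i, d i) / (h - 1).factorial) * R ^ (h - 1) +
      ∑ i ∈ Finset.Icc 2 h, (-1 : ℝ) ^ i * esymm h i d * R ^ (h - i) > 0 := by
  classical
  set S : ℝ := ∑ i, d i with hS
  set P : ℝ := ∏ i, d i with hP
  have hS0 : 0 ≤ S := Finset.sum_nonneg fun i _ => hd i
  have hP0 : 0 ≤ P := Finset.prod_nonneg fun i _ => hd i
  have hPfac : 0 ≤ P / (h - 1).factorial := by positivity
  -- each d i ≤ S
  have hdS : ∀ i, d i ≤ S :=
    fun i => Finset.single_le_sum (fun j _ => hd j) (Finset.mem_univ i)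
  have hdR : ∀ i, d i ≤ R := fun i => le_trans (hdS i) (by linarith)
  -- rewrite sum over Icc 2 h
  have hrange : Finset.range (h + 1) = Finset.Icc 0 h := by
    rw [Finset.range_eq_Ico, ← Finset.Ico_add_one_right_eq_Icc]
  have hsplit : ∑ i ∈ Finset.range (h + 1), (-1 : ℝ) ^ i * esymm h i d * R ^ (h - i) =
      R ^ h - S * R ^ (h - 1) +
        ∑ i ∈ Finset.Icc 2 h, (-1 : ℝ) ^ i * esymm h i d * R ^ (h - i) := by
    have h01 : Finset.Icc 0 h = insert 0 (insert 1 (Finset.Icc 2 h)) := by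
      ext x; simp only [Finset.mem_Icc, Finset.mem_insert]; omega
    rw [hrange, h01, Finset.sum_insert (by simp), Finset.sum_insert (by simp)]
    have he0 : esymm h 0 d = 1 := by
        simp [esymm, Finset.powersetCard_zero]
    have he1 : esymm h 1 d = S := by
      simp [esymm, Finset.powersetCard_one, Finset.sum_map, hS]
    rw [he0, he1, Nat.sub_zero]
    ring
  -- key product identity
  have hkey : R ^ h - (S + P / (h - 1).factorial) * R ^ (h - 1) +
      ∑ i ∈ Finset.Icc 2 h, (-1 : ℝ) ^ i * esymm h i d * R ^ (h - i)
      = (∏ i, (R - d i)) - P / (h - 1).factorial * R ^ (h - 1) := by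
    rw [aux_prod_eq h d R, hsplit]; ring
  rw [hkey]
  -- lower bound on the product
  have hprodlb : R ^ (h - 1) * (R - S) ≤ ∏ i, (R - d i) := by
    have hx : ∀ i : Fin h, R - d i = R * (1 - d i / R) := by
      intro i; field_simp
    rw [Finset.prod_congr rfl fun i _ => hx i, Finset.prod_mul_distrib,
      Finset.prod_const, Finset.card_univ, Fintype.card_fin]
    have hw : 1 - ∑ i, d i / R ≤ ∏ i, (1 - d i / R) := by
      apply aux_one_sub_sum_le
      · intro i _; exact div_nonneg (hd i) hR0.le
      · intro i _; rw [div_le_one hR0]; exact hdR i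
    have hsum : ∑ i : Fin h, d i / R = S / R := by
      rw [hS, Finset.sum_div]
    have : R ^ h * (1 - S / R) ≤ R ^ h * ∏ i, (1 - d i / R) := by
      apply mul_le_mul_of_nonneg_left _ (by positivity)
      rw [← hsum]; exact hw
    refine le_trans (le_of_eq ?_) this
    have hh1 : h = (h - 1) + 1 := by omega
    rw [hh1, pow_succ]
    field_simp
    ring_nf
    simp only [Nat.add_sub_cancel_left]
  have hfinal : P / (h - 1).factorial * R ^ (h - 1) < R ^ (h - 1) * (R - S) := by
    have hRpow : 0 < R ^ (h - 1) := by positivity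
    have : P / (h - 1).factorial < R - S := by linarith
    calc P / (h - 1).factorial * R ^ (h - 1) = R ^ (h - 1) * (P / (h - 1).factorial) := by ring
      _ < R ^ (h - 1) * (R - S) := by
          exact mul_lt_mul_of_pos_left this hRpow
  linarith
end
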